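/- For every tournament T, Σ_{(u,v) arc of T} D(u,v)·(D(u,v) − 1) = 2 · tr_4(T), where tr_4(T) is the number of 4-element subsets of V(T) whose induced subtournament is transitive. -/

import Mathlib

/-- A tournament on `n` vertices: an irreflexive relation such that for every
pair of distinct vertices exactly one direction holds. -/
structure Tournament (n : ℕ) where
  rel : Fin n → Fin n → Bool
  irrefl : ∀ v, rel v v = false
  total : ∀ u v, u ≠ v → rel u v = !rel v u

/-- The transitive tournament `Tr_k`. -/
def Tr (k : ℕ) : Tournament k where
  rel i j := decide (i < j)
  irrefl v := by simp
  total u v h := by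
    rcases lt_or_gt_of_ne h with h' | h'
    · simp [h', asymm h']
    · simp [h', asymm h']

/-- The cyclic triangle. -/
def C3 : Tournament 3 where
  rel := ![![false, true, false], ![false, false, true], ![true, false, false]]
  irrefl := by decide
  total := by decide

/-- `W₄`: the non-transitive tournament on 4 vertices with a "winner". -/
def W4 : Tournament 4 where
  rel := ![![false, true, true, true], ![false, false, true, false],
           ![false, false, false, true], ![false, true, false, false]]
  irrefl := by decide
  total := by decide

/-- `L₄`: the non-transitive tournament on 4 vertices with a "loser". -/
def L4 : Tournament 4 where
  rel := ![![false, true, false, true], ![false, false, true, true],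
           ![true, false, false, true], ![false, false, false, false]]
  irrefl := by decide
  total := by decide

/-- `R₄`: the tournament on 4 vertices with out-degree sequence (1,1,2,2). -/
def R4 : Tournament 4 where
  rel := ![![false, true, true, false], ![false, false, true, true],
           ![false, false, false, true], ![true, false, false, false]]
  irrefl := by decide
  total := by decide

/-- Two tournaments on the same number of vertices are isomorphic if some
permutation of the vertices carries one arc relation to the other. -/
def Isomorphic {k : ℕ} (S T : Tournament k) : Prop :=
  ∃ e : Equiv.Perm (Fin k), ∀ i j, S.rel i j = T.rel (e i) (e j)

/-- The subtournament of `T` induced on the subset `A` is isomorphic to `S`. -/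
def IsoOn {k n : ℕ} (S : Tournament k) (T : Tournament n) (A : Finset (Fin n)) : Prop :=
  ∃ f : Fin k → Fin n, Function.Injective f ∧ Finset.univ.image f = A ∧
    ∀ i j, S.rel i j = T.rel (f i) (f j)

open scoped Classical in
/-- The number of `k`-element subsets of the vertex set of `T` whose induced
subtournament is isomorphic to `S` (where `S` has `k` vertices). -/
noncomputable def copyCount {k n : ℕ} (S : Tournament k) (T : Tournament n) : ℕ :=
  ((Finset.powersetCard k (Finset.univ : Finset (Fin n))).filter (IsoOn S T)).card

/-- The (unlabelled) density `p(S, T)`. -/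
noncomputable def density {k n : ℕ} (S : Tournament k) (T : Tournament n) : ℝ :=
  (copyCount S T : ℝ) / (n.choose k : ℝ)

/-- The number of automorphisms of a tournament. -/
def autCount {k : ℕ} (S : Tournament k) : ℕ :=
  (Finset.univ.filter
    (fun e : Equiv.Perm (Fin k) => ∀ i j, S.rel i j = S.rel (e i) (e j))).card

/-- A sequence of tournaments with growing vertex sets is quasi-random if every
fixed tournament `S` on `k` vertices appears with density tending to
`k! / (|Aut S| * 2^(k(k-1)/2))`. -/
def QuasiRandom {nn : ℕ → ℕ} (T : ∀ j, Tournament (nn j)) : Prop :=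
  ∀ (k : ℕ) (S : Tournament k),
    Filter.Tendsto (fun j => density S (T j)) Filter.atTop
      (nhds ((k.factorial : ℝ) / ((autCount S : ℝ) * 2 ^ (k * (k - 1) / 2))))

/-- `D(u,v) = #{w : u→w ∧ w→v}`. -/
def Dcount {n : ℕ} (T : Tournament n) (u v : Fin n) : ℕ :=
  (Finset.univ.filter (fun w => T.rel u w ∧ T.rel w v)).card

/-- `C(u,v) = #{w : v→w ∧ w→u}`. -/
def Ccount {n : ℕ} (T : Tournament n) (u v : Fin n) : ℕ :=
  (Finset.univ.filter (fun w => T.rel v w ∧ T.rel w u)).card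

/-- `I(u,v) = #{w : w→u ∧ w→v}`. -/
def Icount {n : ℕ} (T : Tournament n) (u v : Fin n) : ℕ :=
  (Finset.univ.filter (fun w => T.rel w u ∧ T.rel w v)).card

/-- `O(u,v) = #{w : u→w ∧ v→w}`. -/
def Ocount {n : ℕ} (T : Tournament n) (u v : Fin n) : ℕ :=
  (Finset.univ.filter (fun w => T.rel u w ∧ T.rel v w)).card

/-- The subset `A` induces a transitive subtournament of `T`. -/
def IsTransOn {n : ℕ} (T : Tournament n) (A : Finset (Fin n)) : Prop :=
  ∀ u ∈ A, ∀ v ∈ A, ∀ w ∈ A, T.rel u v → T.rel v w → T.rel u w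

open scoped Classical in
/-- `tr_m(T)`: the number of `m`-element subsets of the vertex set of `T`
inducing a transitive subtournament. -/
noncomputable def trCount (m : ℕ) {n : ℕ} (T : Tournament n) : ℕ :=
  ((Finset.powersetCard m (Finset.univ : Finset (Fin n))).filter (IsTransOn T)).card

/-- The subtournament of `T` induced on a subset `A` of its vertices. -/
noncomputable def induce {n : ℕ} (T : Tournament n) (A : Finset (Fin n)) :
    Tournament A.card where
  rel i j := T.rel (A.orderIsoOfFin rfl i) (A.orderIsoOfFin rfl j)
  irrefl i := T.irrefl _
  total i j h := T.total _ _ (fun hc => h ((A.orderIsoOfFin rfl).injective (Subtype.ext hc)))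

/-- The out-neighbourhood `N⁺(u)` of a vertex. -/
def outSet {n : ℕ} (T : Tournament n) (u : Fin n) : Finset (Fin n) :=
  Finset.univ.filter (fun w => T.rel u w)

/-- The out-degree of a vertex. -/
def outDeg {n : ℕ} (T : Tournament n) (v : Fin n) : ℕ :=
  (Finset.univ.filter (fun w => T.rel v w)).card

/-- The multiset of out-degrees of a tournament. -/
def outDegs {n : ℕ} (T : Tournament n) : Multiset ℕ :=
  Finset.univ.val.map (outDeg T)

/-- The arc relation of `T` is transitive. -/
def IsTransitiveT {k : ℕ} (S : Tournament k) : Prop :=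
  ∀ u v w, S.rel u v → S.rel v w → S.rel u w


section Aux

variable {n : ℕ} (T : Tournament n)

lemma rel_asymm {u v : Fin n} (h : T.rel u v) : ¬ T.rel v u := by
  intro h'
  by_cases huv : u = v
  · subst huv; simp [T.irrefl u] at h
  · have := T.total u v huv
    rw [this] at h
    simp_all

lemma rel_or {u v : Fin n} (h : u ≠ v) : T.rel u v ∨ T.rel v u := by
  have := T.total u v h
  rcases hb : T.rel v u with _ | _
  · left; simp [this, hb]
  · right; simp [hb]

lemma ne_of_rel {u v : Fin n} (h : T.rel u v) : u ≠ v := by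
  rintro rfl; simp [T.irrefl u] at h

/-- A nonempty transitive subset has a source: a vertex beating all others. -/
lemma exists_source (A : Finset (Fin n)) (hA : A.Nonempty) (ht : IsTransOn T A) :
    ∃ a ∈ A, ∀ b ∈ A, b ≠ a → T.rel a b := by
  obtain ⟨a, haA, hmax⟩ := A.exists_max_image
    (fun a => (A.filter (fun c => T.rel a c)).card) hA
  refine ⟨a, haA, fun b hbA hba => ?_⟩
  by_contra hab
  have hrba : T.rel b a := by
    rcases rel_or T (Ne.symm hba) with h | h
    · exact absurd h hab
    · exact h
  have hsub : insert a (A.filter (fun c => T.rel a c)) ⊆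
      A.filter (fun c => T.rel b c) := by
    intro c hc
    rcases Finset.mem_insert.mp hc with rfl | hc
    · exact Finset.mem_filter.mpr ⟨haA, hrba⟩
    · obtain ⟨hcA, hac⟩ := Finset.mem_filter.mp hc
      exact Finset.mem_filter.mpr ⟨hcA, ht b hbA a haA c hcA hrba hac⟩
  have hnot : a ∉ A.filter (fun c => T.rel a c) := by
    simp [T.irrefl a]
  have h1 := Finset.card_le_card hsub
  rw [Finset.card_insert_of_notMem hnot] at h1
  have := hmax b hbA
  omega

/-- A nonempty transitive subset has a sink: a vertex beaten by all others. -/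
lemma exists_sink (A : Finset (Fin n)) (hA : A.Nonempty) (ht : IsTransOn T A) :
    ∃ a ∈ A, ∀ b ∈ A, b ≠ a → T.rel b a := by
  obtain ⟨a, haA, hmax⟩ := A.exists_max_image
    (fun a => (A.filter (fun c => T.rel c a)).card) hA
  refine ⟨a, haA, fun b hbA hba => ?_⟩
  by_contra hab
  have hrab : T.rel a b := by
    rcases rel_or T (Ne.symm hba) with h | h
    · exact h
    · exact absurd h hab
  have hsub : insert a (A.filter (fun c => T.rel c a)) ⊆
      A.filter (fun c => T.rel c b) := by
    intro c hc
    rcases Finset.mem_insert.mp hc with rfl | hc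
    · exact Finset.mem_filter.mpr ⟨haA, hrab⟩
    · obtain ⟨hcA, hca⟩ := Finset.mem_filter.mp hc
      exact Finset.mem_filter.mpr ⟨hcA, ht c hcA a haA b hbA hca hrab⟩
  have hnot : a ∉ A.filter (fun c => T.rel c a) := by
    simp [T.irrefl a]
  have h1 := Finset.card_le_card hsub
  rw [Finset.card_insert_of_notMem hnot] at h1
  have := hmax b hbA
  omega

/-- The predicate on 4-tuples `(u, v, w, x)`. -/
def TupPred (t : Fin n × Fin n × Fin n × Fin n) : Prop :=
  T.rel t.1 t.2.1 ∧ T.rel t.1 t.2.2.1 ∧ T.rel t.2.2.1 t.2.1 ∧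
    T.rel t.1 t.2.2.2 ∧ T.rel t.2.2.2 t.2.1 ∧ t.2.2.1 ≠ t.2.2.2

instance : DecidablePred (TupPred T) := fun t => by unfold TupPred; infer_instance

/-- The finset of good 4-tuples. -/
def TupSet : Finset (Fin n × Fin n × Fin n × Fin n) :=
  Finset.univ.filter (TupPred T)

def tupF (t : Fin n × Fin n × Fin n × Fin n) : Finset (Fin n) :=
  {t.1, t.2.1, t.2.2.1, t.2.2.2}

lemma tup_distinct {t : Fin n × Fin n × Fin n × Fin n} (h : TupPred T t) :
    t.1 ≠ t.2.1 ∧ t.1 ≠ t.2.2.1 ∧ t.1 ≠ t.2.2.2 ∧ t.2.1 ≠ t.2.2.1 ∧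
      t.2.1 ≠ t.2.2.2 ∧ t.2.2.1 ≠ t.2.2.2 := by
  obtain ⟨h1, h2, h3, h4, h5, h6⟩ := h
  exact ⟨ne_of_rel T h1, ne_of_rel T h2, ne_of_rel T h4,
    (ne_of_rel T h3).symm, (ne_of_rel T h5).symm, h6⟩

lemma tupF_card {t : Fin n × Fin n × Fin n × Fin n} (h : TupPred T t) :
    (tupF t).card = 4 := by
  obtain ⟨d1, d2, d3, d4, d5, d6⟩ := tup_distinct T h
  unfold tupF
  rw [Finset.card_insert_of_notMem (by simp [d1, d2, d3]),
    Finset.card_insert_of_notMem (by simp [d4, d5]),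
    Finset.card_insert_of_notMem (by simp [d6]),
    Finset.card_singleton]

lemma tupF_trans {t : Fin n × Fin n × Fin n × Fin n} (h : TupPred T t) :
    IsTransOn T (tupF t) := by
  obtain ⟨u, v, w, x⟩ := t
  obtain ⟨h1, h2, h3, h4, h5, h6⟩ := h
  have nvu := rel_asymm T h1
  have nwu := rel_asymm T h2
  have nvw := rel_asymm T h3
  have nxu := rel_asymm T h4
  have nvx := rel_asymm T h5
  intro p hp q hq r hr hpq hqr
  simp only [tupF, Finset.mem_insert, Finset.mem_singleton] at hp hq hr
  rcases rel_or T h6 with hwx | hxw <;>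
  [have nxw := rel_asymm T hwx; have nwx := rel_asymm T hxw] <;>
    rcases hp with rfl | rfl | rfl | rfl <;>
    rcases hq with rfl | rfl | rfl | rfl <;>
    rcases hr with rfl | rfl | rfl | rfl <;>
    first
      | assumption
      | (exfalso; simp [T.irrefl] at hpq hqr <;> tauto)
      | (exact absurd hpq (by assumption))
      | (exact absurd hqr (by assumption))
      | (exact absurd hpq (by simp [T.irrefl]))
      | (exact absurd hqr (by simp [T.irrefl]))

lemma fiber_card (A : Finset (Fin n)) (hcard : A.card = 4) (ht : IsTransOn T A) :
    ((TupSet T).filter (fun t => tupF t = A)).card = 2 := by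
  -- get source a and sink d
  have hA : A.Nonempty := Finset.card_pos.mp (by omega)
  obtain ⟨a, haA, ha⟩ := exists_source T A hA ht
  obtain ⟨d, hdA, hd⟩ := exists_sink T A hA ht
  have had : a ≠ d := by
    intro h; subst h
    -- a is both source and sink in a set of card 4 ≥ 2
    obtain ⟨b, hbA, hba⟩ : ∃ b ∈ A, b ≠ a := by
      by_contra hc
      push_neg at hc
      have : A ⊆ {a} := fun x hx => Finset.mem_singleton.mpr (hc x hx)
      have := Finset.card_le_card this
      simp [hcard] at this
    exact rel_asymm T (ha b hbA hba) (hd b hbA hba)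
  -- the two middle vertices
  set B := (A.erase a).erase d with hB
  have hBcard : B.card = 2 := by
    rw [hB, Finset.card_erase_of_mem (Finset.mem_erase.mpr ⟨Ne.symm had, hdA⟩),
      Finset.card_erase_of_mem haA, hcard]
  obtain ⟨b, c, hbc, hBeq⟩ := Finset.card_eq_two.mp hBcard
  have hbB : b ∈ B := by rw [hBeq]; simp
  have hcB : c ∈ B := by rw [hBeq]; simp
  have hbA : b ∈ A := Finset.mem_of_mem_erase (Finset.mem_of_mem_erase hbB)
  have hcA : c ∈ A := Finset.mem_of_mem_erase (Finset.mem_of_mem_erase hcB)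
  have hbna : b ≠ a := Finset.ne_of_mem_erase (Finset.mem_of_mem_erase hbB)
  have hbnd : b ≠ d := Finset.ne_of_mem_erase hbB
  have hcna : c ≠ a := Finset.ne_of_mem_erase (Finset.mem_of_mem_erase hcB)
  have hcnd : c ≠ d := Finset.ne_of_mem_erase hcB
  have hAeq : A = {a, d, b, c} := by
    apply Finset.eq_of_subset_of_card_le
    · intro x hx
      by_cases h1 : x = a
      · simp [h1]
      by_cases h2 : x = d
      · simp [h2]
      have : x ∈ B := Finset.mem_erase.mpr ⟨h2, Finset.mem_erase.mpr ⟨h1, hx⟩⟩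
      rw [hBeq] at this
      simp only [Finset.mem_insert, Finset.mem_singleton] at this
      rcases this with rfl | rfl <;> simp
    · rw [hcard]
      have h1 := Finset.card_insert_le a ({d, b, c} : Finset (Fin n))
      have h2 := Finset.card_insert_le d ({b, c} : Finset (Fin n))
      have h3 := Finset.card_insert_le b ({c} : Finset (Fin n))
      have h4 : ({c} : Finset (Fin n)).card = 1 := Finset.card_singleton c
      omega
  -- the fiber is exactly {(a,d,b,c), (a,d,c,b)}
  have hfib : (TupSet T).filter (fun t => tupF t = A) =
      {(a, d, b, c), (a, d, c, b)} := by
    apply Finset.Subset.antisymm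
    · intro t htmem
      obtain ⟨htS, htf⟩ := Finset.mem_filter.mp htmem
      have hP : TupPred T t := (Finset.mem_filter.mp htS).2
      obtain ⟨u, v, w, x⟩ := t
      obtain ⟨h1, h2, h3, h4, h5, h6⟩ := hP
      have hmemset : ∀ y, y ∈ A ↔ (y = u ∨ y = v ∨ y = w ∨ y = x) := by
        intro y
        rw [← htf]
        simp [tupF]
      -- u is a source of A
      have huA : u ∈ A := (hmemset u).mpr (Or.inl rfl)
      have hvA : v ∈ A := (hmemset v).mpr (Or.inr (Or.inl rfl))
      have hwA : w ∈ A := (hmemset w).mpr (Or.inr (Or.inr (Or.inl rfl)))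
      have hxA : x ∈ A := (hmemset x).mpr (Or.inr (Or.inr (Or.inr rfl)))
      have hua : u = a := by
        by_contra hne
        have h' := ha u huA hne
        -- a ∈ A is one of u,v,w,x; a ≠ u so a ∈ {v,w,x}; but u beats all of them
        rcases (hmemset a).mp haA with rfl | rfl | rfl | rfl
        · exact hne rfl
        · exact rel_asymm T h1 h'
        · exact rel_asymm T h2 h'
        · exact rel_asymm T h4 h'
      have hvd : v = d := by
        by_contra hne
        have h' := hd v hvA hne
        rcases (hmemset d).mp hdA with rfl | rfl | rfl | rfl
        · exact rel_asymm T h1 h'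
        · exact hne rfl
        · exact rel_asymm T h3 h'
        · exact rel_asymm T h5 h'
      subst hua hvd
      have hwB : w ∈ B := Finset.mem_erase.mpr
        ⟨ne_of_rel T h3, Finset.mem_erase.mpr ⟨(ne_of_rel T h2).symm, hwA⟩⟩
      have hxB : x ∈ B := Finset.mem_erase.mpr
        ⟨ne_of_rel T h5, Finset.mem_erase.mpr ⟨(ne_of_rel T h4).symm, hxA⟩⟩
      rw [hBeq] at hwB hxB
      simp only [Finset.mem_insert, Finset.mem_singleton] at hwB hxB
      simp only [Finset.mem_insert, Finset.mem_singleton, Prod.mk.injEq]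
      rcases hwB with rfl | rfl <;> rcases hxB with rfl | rfl <;> tauto
    · intro t htmem
      have habd : T.rel a d := ha d hdA (Ne.symm had)
      have hab : T.rel a b := ha b hbA hbna
      have hac : T.rel a c := ha c hcA hcna
      have hbd : T.rel b d := hd b hbA hbnd
      have hcd : T.rel c d := hd c hcA hcnd
      simp only [Finset.mem_insert, Finset.mem_singleton] at htmem
      rcases htmem with rfl | rfl <;>
        refine Finset.mem_filter.mpr ⟨Finset.mem_filter.mpr ⟨Finset.mem_univ _, ?_⟩, ?_⟩
      · exact ⟨habd, hab, hbd, hac, hcd, hbc⟩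
      · rw [hAeq]; rfl
      · exact ⟨habd, hac, hcd, hab, hbd, hbc.symm⟩
      · rw [hAeq]; unfold tupF; ext y; simp only [Finset.mem_insert, Finset.mem_singleton]; tauto
  rw [hfib]
  rw [Finset.card_insert_of_notMem (by simp [Prod.ext_iff, hbc]), Finset.card_singleton]

end Aux

/-- `Σ_{arcs (u,v)} D(u,v)(D(u,v)-1) = 2 · tr₄(T)`. -/
theorem sum_D_pairs_eq_two_tr4 (n : ℕ) (T : Tournament n) :
    (∑ u, ∑ v, if T.rel u v then Dcount T u v * (Dcount T u v - 1) else 0) =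
      2 * trCount 4 T := by
  classical
  set trS : Finset (Finset (Fin n)) :=
    (Finset.powersetCard 4 (Finset.univ : Finset (Fin n))).filter (IsTransOn T) with htrS
  have hmaps : ∀ t ∈ TupSet T, tupF t ∈ trS := by
    intro t ht
    have hP : TupPred T t := (Finset.mem_filter.mp ht).2
    rw [htrS, Finset.mem_filter, Finset.mem_powersetCard_univ]
    exact ⟨tupF_card T hP, tupF_trans T hP⟩
  have hcardS : (TupSet T).card = 2 * trS.card := by
    rw [Finset.card_eq_sum_card_fiberwise hmaps]
    have hfib : ∀ A ∈ trS, ((TupSet T).filter (fun t => tupF t = A)).card = 2 := by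
      intro A hA
      rw [htrS, Finset.mem_filter, Finset.mem_powersetCard_univ] at hA
      exact fiber_card T A hA.1 hA.2
    rw [Finset.sum_congr rfl hfib, Finset.sum_const, smul_eq_mul, mul_comm]
  have htr : trCount 4 T = trS.card := by
    unfold trCount
    congr 1
  have h1 : (∑ u, ∑ v, if T.rel u v then Dcount T u v * (Dcount T u v - 1) else 0)
      = (TupSet T).card := by
    rw [TupSet, Finset.card_filter, Fintype.sum_prod_type]
    refine Finset.sum_congr rfl fun u _ => ?_
    rw [Fintype.sum_prod_type]
    refine Finset.sum_congr rfl fun v _ => ?_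
    by_cases huv : T.rel u v
    · rw [if_pos huv]
      set W : Finset (Fin n) :=
        Finset.univ.filter (fun w => T.rel u w ∧ T.rel w v) with hW
      have hD : Dcount T u v = W.card := rfl
      have hoff : W.offDiag =
          Finset.univ.filter (fun p : Fin n × Fin n => TupPred T (u, v, p.1, p.2)) := by
        ext p
        simp only [Finset.mem_offDiag, hW, Finset.mem_filter, Finset.mem_univ,
          true_and, TupPred, huv]
        tauto
      have harith : W.card * (W.card - 1) = W.card * W.card - W.card := by
        cases hWc : W.card with
        | zero => simp
        | succ k => simp [Nat.succ_sub_one, Nat.mul_succ, Nat.succ_mul]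
      rw [hD, harith, ← Finset.offDiag_card, hoff, Finset.card_filter,
        Fintype.sum_prod_type]
    · rw [if_neg huv]
      symm
      apply Finset.sum_eq_zero
      intro p _
      rw [if_neg]
      intro hP
      exact huv hP.1
  rw [h1, hcardS, htr]
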